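/- Define the effective Hamiltonian H̄(p) for the Hamiltonian H(x,q) = q²/2 − cos²(κ₀x/2) by: H̄(p) = 0 if |p| ≤ 2√2/π, and H̄(p) = λ where λ ≥ 0 is the unique solution of |p| = (√2/2π)∫₀^{2π}√(cos²(κ₀x/2)+λ)dx if |p| ≥ 2√2/π. Then H̄ is well-defined and continuous on ℝ. -/

import Mathlib

open Real MeasureTheory intervalIntegral Set

theorem stmt12 (κ₀ : ℕ) (hκ : 0 < κ₀) :
    ∃! Hbar : ℝ → ℝ,
      Continuous Hbar ∧
      (∀ p : ℝ, |p| ≤ 2 * Real.sqrt 2 / π → Hbar p = 0) ∧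
      (∀ p : ℝ, 2 * Real.sqrt 2 / π ≤ |p| →
        0 ≤ Hbar p ∧
        |p| = (Real.sqrt 2 / (2 * π)) * ∫ x in (0)..(2 * π),
            Real.sqrt (Real.cos (κ₀ * x / 2) ^ 2 + Hbar p)) := by
  have hπ : (0:ℝ) < π := Real.pi_pos
  set c : ℝ := (κ₀ : ℝ) with hcdef
  have hc0 : (0:ℝ) < c := by rw [hcdef]; exact_mod_cast hκ
  set f : ℝ → ℝ := fun l =>
    (Real.sqrt 2 / (2 * π)) * ∫ x in (0:ℝ)..(2 * π), Real.sqrt (Real.cos (c * x / 2) ^ 2 + l)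
    with hfdef
  have hconst : (0:ℝ) < Real.sqrt 2 / (2 * π) := by positivity
  -- continuity of integrand, jointly
  have hFc : Continuous (Function.uncurry fun (l : ℝ) (x : ℝ) =>
      Real.sqrt (Real.cos (c * x / 2) ^ 2 + l)) := by
    apply Real.continuous_sqrt.comp
    fun_prop
  have hintg : ∀ l : ℝ, Continuous fun x => Real.sqrt (Real.cos (c * x / 2) ^ 2 + l) := by
    intro l
    apply Real.continuous_sqrt.comp
    fun_prop
  have hInt : ∀ l a b : ℝ,
      IntervalIntegrable (fun x => Real.sqrt (Real.cos (c * x / 2) ^ 2 + l)) volume a b :=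
    fun l a b => (hintg l).intervalIntegrable a b
  -- continuity of f
  have hfc : Continuous f := by
    apply continuous_const.mul
    exact continuous_parametric_intervalIntegral_of_continuous' hFc 0 (2*π)
  -- strict monotonicity on Ici 0
  have hmonoOn : StrictMonoOn f (Ici (0:ℝ)) := by
    intro a ha b hb hab
    have key : 0 < ∫ x in (0:ℝ)..(2*π),
        (Real.sqrt (Real.cos (c * x / 2) ^ 2 + b) - Real.sqrt (Real.cos (c * x / 2) ^ 2 + a)) := by
      apply intervalIntegral.intervalIntegral_pos_of_pos ((hInt b 0 (2*π)).sub (hInt a 0 (2*π)))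
      · intro x
        have h1 : (0:ℝ) ≤ Real.cos (c * x / 2) ^ 2 + a := add_nonneg (sq_nonneg _) ha
        exact sub_pos.2 (Real.sqrt_lt_sqrt h1 (by linarith))
      · positivity
    rw [integral_sub (hInt b 0 (2*π)) (hInt a 0 (2*π))] at key
    have : f b - f a = (Real.sqrt 2 / (2 * π)) *
        ((∫ x in (0:ℝ)..(2*π), Real.sqrt (Real.cos (c * x / 2) ^ 2 + b)) -
         (∫ x in (0:ℝ)..(2*π), Real.sqrt (Real.cos (c * x / 2) ^ 2 + a))) := by
      simp [hfdef]; ring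
    nlinarith [mul_pos hconst key]
  -- value at 0
  have habs : (∫ x in (0:ℝ)..(2*π), Real.sqrt (Real.cos (c * x / 2) ^ 2 + 0))
      = ∫ x in (0:ℝ)..(2*π), |Real.cos (c * x / 2)| := by
    apply integral_congr
    intro x _
    simp [Real.sqrt_sq_eq_abs]
  have hper : Function.Periodic (fun u : ℝ => |Real.cos u|) π := by
    intro u
    simp [Real.cos_add_pi, abs_neg]
  have hintabs : ∀ a b : ℝ, IntervalIntegrable (fun u : ℝ => |Real.cos u|) volume a b :=
    fun a b => (Real.continuous_cos.abs).intervalIntegrable a b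
  have hpi1 : (∫ u in (0:ℝ)..π, |Real.cos u|) = 2 := by
    have hsplit : (∫ u in (0:ℝ)..π, |Real.cos u|)
        = (∫ u in (0:ℝ)..(π/2), |Real.cos u|) + ∫ u in (π/2:ℝ)..π, |Real.cos u| :=
      (integral_add_adjacent_intervals (hintabs 0 (π/2)) (hintabs (π/2) π)).symm
    have h1 : (∫ u in (0:ℝ)..(π/2), |Real.cos u|) = ∫ u in (0:ℝ)..(π/2), Real.cos u := by
      apply integral_congr
      intro x hx
      rw [Set.uIcc_of_le (by positivity)] at hx
      exact abs_of_nonneg (Real.cos_nonneg_of_mem_Icc ⟨by linarith [hx.1], hx.2⟩)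
    have h2 : (∫ u in (π/2:ℝ)..π, |Real.cos u|) = ∫ u in (π/2:ℝ)..π, -Real.cos u := by
      apply integral_congr
      intro x hx
      rw [Set.uIcc_of_le (by linarith)] at hx
      exact abs_of_nonpos (Real.cos_nonpos_of_pi_div_two_le_of_le hx.1 (by linarith [hx.2]))
    rw [hsplit, h1, h2, integral_cos, intervalIntegral.integral_neg, integral_cos]
    norm_num
  have hcomp : (∫ x in (0:ℝ)..(2*π), |Real.cos (c * x / 2)|)
      = (c/2)⁻¹ • ∫ u in ((c/2) * 0 : ℝ)..((c/2) * (2*π)), |Real.cos u| := by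
    rw [← integral_comp_mul_left (fun u => |Real.cos u|) ((by positivity : (0:ℝ) < c/2).ne')]
    apply integral_congr
    intro x _
    ring_nf
  have hmulpi : (∫ u in (0:ℝ)..(c * π), |Real.cos u|) = c * 2 := by
    have h := Function.Periodic.intervalIntegral_add_zsmul_eq hper (κ₀ : ℤ) 0 hintabs
    simp only [zero_add, zsmul_eq_mul, Int.cast_natCast] at h
    rw [hpi1] at h
    rw [hcdef, h]
  have hf0 : f 0 = 2 * Real.sqrt 2 / π := by
    have : ((c/2) * 0 : ℝ) = 0 := by ring
    simp only [hfdef]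
    rw [habs, hcomp, this]
    have h2 : ((c/2) * (2*π) : ℝ) = c * π := by ring
    rw [h2, hmulpi, smul_eq_mul]
    field_simp
  -- growth
  have hgrow : ∀ l : ℝ, 0 ≤ l → Real.sqrt 2 * Real.sqrt l ≤ f l := by
    intro l hl
    have hlow : (∫ x in (0:ℝ)..(2*π), Real.sqrt l)
        ≤ ∫ x in (0:ℝ)..(2*π), Real.sqrt (Real.cos (c * x / 2) ^ 2 + l) := by
      apply integral_mono_on (by positivity)
        (intervalIntegrable_const) (hInt l 0 (2*π))
      intro x _
      exact Real.sqrt_le_sqrt (by nlinarith [sq_nonneg (Real.cos (c * x / 2))])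
    rw [intervalIntegral.integral_const, smul_eq_mul, sub_zero] at hlow
    have : Real.sqrt 2 / (2 * π) * (2 * π * Real.sqrt l) ≤ f l := by
      exact mul_le_mul_of_nonneg_left hlow hconst.le
    calc Real.sqrt 2 * Real.sqrt l = Real.sqrt 2 / (2 * π) * (2 * π * Real.sqrt l) := by
          field_simp
      _ ≤ f l := this
  -- extended function
  set g : ℝ → ℝ := fun l => if l < 0 then f 0 + l else f l with hgdef
  have hg_eq : ∀ l : ℝ, 0 ≤ l → g l = f l := by
    intro l hl; simp [hgdef, not_lt.mpr hl]
  have hgmono : StrictMono g := by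
    intro a b hab
    rcases lt_or_ge a 0 with ha | ha
    · rcases lt_or_ge b 0 with hb | hb
      · simp [hgdef, ha, hb]; linarith
      · have hga : g a = f 0 + a := by simp [hgdef, ha]
        rw [hga, hg_eq b hb]
        have : f 0 ≤ f b := by
          rcases eq_or_lt_of_le hb with h | h
          · rw [← h]
          · exact (hmonoOn (Set.mem_Ici.mpr le_rfl) hb h).le
        linarith
    · rw [hg_eq a ha, hg_eq b (le_trans ha hab.le)]
      exact hmonoOn ha (le_trans ha hab.le) hab
  have hgsurj : Function.Surjective g := by
    intro y
    rcases lt_or_ge y (f 0) with hy | hy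
    · exact ⟨y - f 0, by simp [hgdef, show y - f 0 < 0 by linarith]⟩
    · have hy0 : 0 < y := lt_of_lt_of_le (by rw [hf0]; positivity) hy
      set M : ℝ := y ^ 2 / 2 with hMdef
      have hM0 : 0 ≤ M := by positivity
      have hfM : y ≤ f M := by
        have h1 : Real.sqrt 2 * Real.sqrt M = y := by
          rw [← Real.sqrt_mul (by norm_num : (0:ℝ) ≤ 2)]
          rw [show 2 * M = y ^ 2 by rw [hMdef]; ring]
          exact Real.sqrt_sq hy0.le
        calc y = Real.sqrt 2 * Real.sqrt M := h1.symm
          _ ≤ f M := hgrow M hM0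
      have := intermediate_value_Icc hM0 hfc.continuousOn (a := 0) (b := M)
      obtain ⟨l, hl, hfl⟩ := this ⟨hy, hfM⟩
      exact ⟨l, by rw [hg_eq l hl.1]; exact hfl⟩
  set e : ℝ ≃o ℝ := StrictMono.orderIsoOfSurjective g hgmono hgsurj with hedef
  have he_apply : ∀ l : ℝ, e l = g l := fun l => rfl
  have he_symm_g : ∀ l : ℝ, e.symm (g l) = l := fun l => e.symm_apply_apply l
  have hg_esymm : ∀ y : ℝ, g (e.symm y) = y := fun y => e.apply_symm_apply y
  have he_symm_f0 : e.symm (f 0) = 0 := by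
    have := he_symm_g 0
    rwa [hg_eq 0 le_rfl] at this
  have hesc : Continuous (⇑e.symm) := e.symm.continuous
  -- define Hbar
  refine ⟨fun p => max 0 (e.symm |p|), ⟨?_, ?_, ?_⟩, ?_⟩
  · exact continuous_const.max (hesc.comp continuous_abs)
  · intro p hp
    rw [← hf0] at hp
    have : e.symm |p| ≤ e.symm (f 0) := e.symm.monotone hp
    rw [he_symm_f0] at this
    exact max_eq_left this
  · intro p hp
    rw [← hf0] at hp
    have hge : 0 ≤ e.symm |p| := by
      rw [← he_symm_f0]; exact e.symm.monotone hp
    have hmax : max 0 (e.symm |p|) = e.symm |p| := max_eq_right hge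
    refine ⟨le_max_left _ _, ?_⟩
    simp only [hmax]
    have := hg_esymm |p|
    rw [hg_eq _ hge] at this
    exact this.symm
  · -- uniqueness
    rintro H ⟨_, h1, h2⟩
    funext p
    rcases le_total (|p|) (2 * Real.sqrt 2 / π) with hp | hp
    · rw [h1 p hp]
      rw [← hf0] at hp
      have : e.symm |p| ≤ e.symm (f 0) := e.symm.monotone hp
      rw [he_symm_f0] at this
      exact (max_eq_left this).symm
    · obtain ⟨hH0, hHeq⟩ := h2 p hp
      rw [← hf0] at hp
      have hge : 0 ≤ e.symm |p| := by
        rw [← he_symm_f0]; exact e.symm.monotone hp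
      have hmax : max 0 (e.symm |p|) = e.symm |p| := max_eq_right hge
      have hf_esymm : f (e.symm |p|) = |p| := by
        have := hg_esymm |p|
        rwa [hg_eq _ hge] at this
      have hfH : f (H p) = |p| := hHeq.symm
      have : H p = e.symm |p| :=
        hmonoOn.injOn hH0 hge (by rw [hfH, hf_esymm])
      rw [this, hmax]
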